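/- Let N be a lattice with dual M, S a finite set, u : S → M, Δ a fan in N_ℝ, and σ ∈ Σ(Δ, u) = {σ₁ ∩ σ₂ : σ₁ ∈ Δ, σ₂ ∈ Σ(u)}. Then: (b) there exists ω_σ ∈ M such that u(i) − ω_σ ∈ σ^∨ for all i ∈ S, and u(i) − ω_σ ∈ σ^⊥ ∩ M for at least one i ∈ S; (c) if ω'_σ also satisfies these two conditions, then ω_σ − ω'_σ ∈ σ^⊥ ∩ M; (d) consequently the set S^σ = {i ∈ S : u(i) − ω_σ ∈ σ^⊥ ∩ M} is nonempty and independent of the choice of such ω_σ. -/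
import Mathlib


open scoped TensorProduct

noncomputable section

/-- The real scalar extension `N_ℝ = ℝ ⊗_ℤ N` of a lattice `N`. -/
abbrev NReal (N : Type*) [AddCommGroup N] := ℝ ⊗[ℤ] N

/-- A lattice linear functional `m ∈ M = Hom(N, ℤ)` extended to `N_ℝ`. -/
def pairR {N : Type*} [AddCommGroup N] (m : Module.Dual ℤ N) :
    Module.Dual ℝ (NReal N) :=
  (Algebra.TensorProduct.rid ℤ ℝ ℝ).toLinearMap ∘ₗ LinearMap.baseChange ℝ m

variable {N : Type*} [AddCommGroup N] [Module.Free ℤ N] [Module.Finite ℤ N]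
  {S : Type} [Fintype S] [Nonempty S]

/-- The polytope `P(u) ⊆ M_ℝ`: the convex hull of the (real extensions of the) lattice
points `u i ∈ M`. -/
def polytopeOf (u : S → Module.Dual ℤ N) : Set (Module.Dual ℝ (NReal N)) :=
  convexHull ℝ (Set.range fun i => pairR (u i))

/-- Faces of the polytope `P(u)`: sets of minimizers of some `x ∈ N_ℝ`. -/
def IsPolytopeFace (u : S → Module.Dual ℤ N) (Q : Set (Module.Dual ℝ (NReal N))) :
    Prop :=
  ∃ x : NReal N, Q = {ω ∈ polytopeOf u | ∀ ω' ∈ polytopeOf u, ω x ≤ ω' x}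

/-- The (inner) normal fan `Σ(u)` of `P(u)`, a collection of cones in `N_ℝ`. -/
def normalFan (u : S → Module.Dual ℤ N) : Set (Set (NReal N)) :=
  {σ | ∃ Q, IsPolytopeFace u Q ∧
    σ = {x | ∀ ω₁ ∈ polytopeOf u, ∀ ω₂ ∈ Q, 0 ≤ (ω₁ - ω₂) x}}

/-- The common refinement `Σ(Δ, u) = {σ₁ ∩ σ₂ : σ₁ ∈ Δ, σ₂ ∈ Σ(u)}`. -/
def commonRefinement (Δ : Set (Set (NReal N))) (u : S → Module.Dual ℤ N) :
    Set (Set (NReal N)) :=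
  {σ | ∃ σ₁ ∈ Δ, ∃ σ₂ ∈ normalFan u, σ = σ₁ ∩ σ₂}

/-- `ω_σ` satisfies the two conditions of Proposition (b):  `u i − ω_σ ∈ σ^∨` for all
`i ∈ S`, and `u i − ω_σ ∈ σ^⊥ ∩ M` for at least one `i ∈ S`. -/
def IsVertexShift (u : S → Module.Dual ℤ N) (σ : Set (NReal N))
    (ωσ : Module.Dual ℤ N) : Prop :=
  (∀ i, ∀ x ∈ σ, 0 ≤ pairR (u i - ωσ) x) ∧
  (∃ i, ∀ x ∈ σ, pairR (u i - ωσ) x = 0)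


lemma pairR_sub' {N : Type*} [AddCommGroup N] (m m' : Module.Dual ℤ N) :
    pairR (N := N) (m - m') = pairR m - pairR m' := by
  unfold pairR
  rw [LinearMap.baseChange_sub, LinearMap.comp_sub]

/-- Let `σ ∈ Σ(Δ, u)`.  Then:
(b) there is `ω_σ ∈ M` with `u i − ω_σ ∈ σ^∨` for all `i` and `u i − ω_σ ∈ σ^⊥ ∩ M`
for some `i`;
(c) any two such `ω_σ, ω'_σ` differ by an element of `σ^⊥ ∩ M`;
(d) consequently `S^σ = {i : u i − ω_σ ∈ σ^⊥ ∩ M}` is nonempty and independent of the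
choice of `ω_σ`. -/
theorem stmt16 (u : S → Module.Dual ℤ N) (Δ : Set (Set (NReal N)))
    (σ : Set (NReal N)) (hσ : σ ∈ commonRefinement Δ u) :
    (∃ ωσ : Module.Dual ℤ N, IsVertexShift u σ ωσ) ∧
    (∀ ωσ ωσ' : Module.Dual ℤ N, IsVertexShift u σ ωσ → IsVertexShift u σ ωσ' →
      ∀ x ∈ σ, pairR (ωσ - ωσ') x = 0) ∧
    (∀ ωσ ωσ' : Module.Dual ℤ N, IsVertexShift u σ ωσ → IsVertexShift u σ ωσ' →
      {i | ∀ x ∈ σ, pairR (u i - ωσ) x = 0}.Nonempty ∧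
      {i | ∀ x ∈ σ, pairR (u i - ωσ) x = 0} =
        {i | ∀ x ∈ σ, pairR (u i - ωσ') x = 0}) := by
  obtain ⟨σ₁, hσ₁, σ₂, ⟨Q, ⟨x₀, hQ⟩, hσ₂⟩, rfl⟩ := hσ
  obtain ⟨i₀, hi₀⟩ := Finite.exists_min (fun i => pairR (u i) x₀)
  have hmemP : ∀ i, pairR (u i) ∈ polytopeOf u := fun i =>
    subset_convexHull ℝ _ ⟨i, rfl⟩
  have hQ0 : pairR (u i₀) ∈ Q := by
    rw [hQ]
    refine ⟨hmemP i₀, fun ω' hω' => ?_⟩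
    have : ω' ∈ {ω : Module.Dual ℝ (NReal N) | pairR (u i₀) x₀ ≤ ω x₀} := by
      refine convexHull_min ?_ ?_ hω'
      · rintro _ ⟨i, rfl⟩; exact hi₀ i
      · exact convex_halfSpace_ge ⟨fun a b => rfl, fun c a => rfl⟩ _
    exact this
  have key : ∀ i, ∀ x ∈ σ₁ ∩ σ₂, 0 ≤ pairR (u i - u i₀) x := by
    intro i x hx
    have hx2 := hx.2
    rw [hσ₂] at hx2
    have h := hx2 (pairR (u i)) (hmemP i) (pairR (u i₀)) hQ0
    rwa [pairR_sub']
  have hb : IsVertexShift u (σ₁ ∩ σ₂) (u i₀) := by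
    refine ⟨key, i₀, fun x hx => ?_⟩
    rw [sub_self]
    simp [pairR]
  have hc : ∀ ωσ ωσ' : Module.Dual ℤ N, IsVertexShift u (σ₁ ∩ σ₂) ωσ →
      IsVertexShift u (σ₁ ∩ σ₂) ωσ' →
      ∀ x ∈ σ₁ ∩ σ₂, pairR (ωσ - ωσ') x = 0 := by
    rintro ωσ ωσ' ⟨h1, j, hj⟩ ⟨h1', j', hj'⟩ x hx
    have A := h1 j' x hx
    have B := hj' x hx
    have C := h1' j x hx
    have D := hj x hx
    rw [pairR_sub', LinearMap.sub_apply] at A B C D ⊢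
    linarith
  refine ⟨⟨u i₀, hb⟩, hc, ?_⟩
  rintro ωσ ωσ' h h'
  refine ⟨⟨h.2.choose, h.2.choose_spec⟩, Set.ext fun i => ?_⟩
  constructor <;> intro hi x hx
  · have := hc ωσ ωσ' h h' x hx
    have hix := hi x hx
    rw [pairR_sub', LinearMap.sub_apply] at this hix ⊢
    linarith
  · have := hc ωσ ωσ' h h' x hx
    have hix := hi x hx
    rw [pairR_sub', LinearMap.sub_apply] at this hix ⊢
    linarith


end
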